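/- (Minimum Signatures Lemma) Let σ be a sequence of pebbling moves of minimum length among all sequences starting from p that place at least k pebbles on a vertex r, where p(r) ≤ k, and let D be its signature. Then D is acyclic, every sink of D with positive indegree equals r, the outdegree of r in D is 0, and the indegree of r in D is exactly k - p(r). -/

import Mathlib

variable {V : Type*} [DecidableEq V]

/-- Result of a pebbling move `u → v`: remove two pebbles from `u`, add one to `v`. -/
def applyMove (p : V → ℕ) (u v : V) (x : V) : ℕ :=
  (if x = u then p x - 2 else p x) + (if x = v then 1 else 0)

/-- A list of moves is a valid sequence of pebbling moves from `p` in `G`. -/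
def IsValidSeq (G : SimpleGraph V) : (V → ℕ) → List (V × V) → Prop
  | _, [] => True
  | p, m :: rest => G.Adj m.1 m.2 ∧ 2 ≤ p m.1 ∧ IsValidSeq G (applyMove p m.1 m.2) rest

/-- The distribution after executing a sequence of pebbling moves. -/
def applySeq (p : V → ℕ) : List (V × V) → V → ℕ
  | [] => p
  | m :: rest => applySeq (applyMove p m.1 m.2) rest

/-- Indegree of a vertex in a directed multigraph (multiset of directed edges). -/
def indeg (D : Multiset (V × V)) (v : V) : ℕ :=
  Multiset.card (D.filter fun e => e.2 = v)

/-- Outdegree of a vertex in a directed multigraph. -/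
def outdeg (D : Multiset (V × V)) (v : V) : ℕ :=
  Multiset.card (D.filter fun e => e.1 = v)

/-- balance(D,p,v) = p(v) + indeg_D(v) - 2·outdeg_D(v). -/
def balance (D : Multiset (V × V)) (p : V → ℕ) (v : V) : ℤ :=
  (p v : ℤ) + (indeg D v : ℤ) - 2 * (outdeg D v : ℤ)

/-- `D` is orderable under `p`: some ordering of the edge multiset of `D`
is a valid sequence of pebbling moves. -/
def Orderable (G : SimpleGraph V) (D : Multiset (V × V)) (p : V → ℕ) : Prop :=
  ∃ σ : List (V × V), (σ : Multiset (V × V)) = D ∧ IsValidSeq G p σ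

/-- A directed multigraph is acyclic if its edge relation admits no directed cycle. -/
def DAcyclic (D : Multiset (V × V)) : Prop :=
  ∀ v : V, ¬ Relation.TransGen (fun a b => (a, b) ∈ D) v v

/-- The strongly connected component of `a` in the directed multigraph `D`. -/
def SCC (D : Multiset (V × V)) (a : V) : Set V :=
  {b | Relation.ReflTransGen (fun x y => (x, y) ∈ D) a b ∧
       Relation.ReflTransGen (fun x y => (x, y) ∈ D) b a}

-- ===== auxiliary lemmas =====

lemma indeg_cons (e : V × V) (D : Multiset (V × V)) (v : V) :
    indeg (e ::ₘ D) v = (if v = e.2 then 1 else 0) + indeg D v := by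
  simp only [indeg, Multiset.filter_cons, eq_comm (a := v)]
  split_ifs <;> simp [Multiset.card_singleton, Nat.add_comm]

lemma outdeg_cons (e : V × V) (D : Multiset (V × V)) (v : V) :
    outdeg (e ::ₘ D) v = (if v = e.1 then 1 else 0) + outdeg D v := by
  simp only [outdeg, Multiset.filter_cons, eq_comm (a := v)]
  split_ifs <;> simp [Multiset.card_singleton, Nat.add_comm]

lemma indeg_zero (v : V) : indeg (0 : Multiset (V × V)) v = 0 := rfl
lemma outdeg_zero (v : V) : outdeg (0 : Multiset (V × V)) v = 0 := rfl

lemma valid_adj {G : SimpleGraph V} : ∀ {p : V → ℕ} {σ : List (V × V)},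
    IsValidSeq G p σ → ∀ e ∈ σ, G.Adj e.1 e.2 := by
  intro p σ
  induction σ generalizing p with
  | nil => intro _ e he; simp at he
  | cons m rest ih =>
    rintro ⟨hadj, _, hrest⟩ e he
    rcases List.mem_cons.1 he with h | h
    · subst h; exact hadj
    · exact ih hrest e h

lemma applyMove_cast {p : V → ℕ} {a b : V} (h : 2 ≤ p a) (x : V) :
    ((applyMove p a b x : ℕ) : ℤ)
      = (p x : ℤ) + (if x = b then 1 else 0) - (if x = a then 2 else 0) := by
  unfold applyMove
  split_ifs with h1 h2 h2 <;> subst_vars <;> push_cast [Nat.cast_sub h] <;> ring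

lemma applySeq_cast {G : SimpleGraph V} : ∀ {σ : List (V × V)} {p : V → ℕ},
    IsValidSeq G p σ → ∀ v, (applySeq p σ v : ℤ) = balance (σ : Multiset (V × V)) p v := by
  intro σ
  induction σ with
  | nil =>
    intro p _ v
    simp [applySeq, balance, indeg_zero, outdeg_zero]
  | cons m rest ih =>
    rintro p ⟨hadj, h2, hrest⟩ v
    have hne : m.1 ≠ m.2 := G.ne_of_adj hadj
    have := ih hrest v
    show ((applySeq (applyMove p m.1 m.2) rest v : ℕ) : ℤ) = _
    rw [this]
    have hc : ((m :: rest : List (V × V)) : Multiset (V × V))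
        = m ::ₘ (rest : Multiset (V × V)) := rfl
    rw [hc]
    unfold balance
    rw [indeg_cons, outdeg_cons, applyMove_cast h2]
    push_cast
    split_ifs <;> ring

lemma exists_min_rel {α : Type*} (r : α → α → Prop) (htr : Transitive r)
    (hirr : ∀ x, ¬ r x x) (s : Finset α) (hs : s.Nonempty) :
    ∃ m ∈ s, ∀ x ∈ s, ¬ r x m := by
  classical
  induction s using Finset.strongInduction with
  | _ s ih =>
    obtain ⟨a, ha⟩ := hs
    by_cases h : ∀ x ∈ s, ¬ r x a
    · exact ⟨a, ha, h⟩
    · push_neg at h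
      obtain ⟨x, hx, hxa⟩ := h
      have hss : s.filter (fun y => r y a) ⊂ s := by
        refine ⟨Finset.filter_subset _ _, fun hsub => ?_⟩
        have := hsub ha
        simp only [Finset.mem_filter] at this
        exact hirr a this.2
      obtain ⟨m, hm, hmin⟩ := ih _ hss ⟨x, by simp [Finset.mem_filter, hx, hxa]⟩
      simp only [Finset.mem_filter] at hm
      refine ⟨m, hm.1, fun y hy hym => ?_⟩
      exact hmin y (by simp [Finset.mem_filter, hy, htr hym hm.2]) hym

inductive EWalk (D : Multiset (V × V)) : V → V → List (V × V) → Prop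
  | single {a b : V} (h : (a, b) ∈ D) : EWalk D a b [(a, b)]
  | cons {a b c : V} {l : List (V × V)} (h : (a, b) ∈ D) (hw : EWalk D b c l) :
      EWalk D a c ((a, b) :: l)

lemma EWalk.mem_of {D : Multiset (V × V)} {a b : V} {l : List (V × V)}
    (hw : EWalk D a b l) : ∀ e ∈ l, e ∈ D := by
  induction hw with
  | single h => intro e he; simp at he; subst he; exact h
  | cons h _ ih =>
    intro e he
    rcases List.mem_cons.1 he with h' | h'
    · subst h'; exact h
    · exact ih e h'

lemma EWalk.ne_nil {D : Multiset (V × V)} {a b : V} {l : List (V × V)}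
    (hw : EWalk D a b l) : l ≠ [] := by
  cases hw <;> simp

lemma EWalk.append {D : Multiset (V × V)} {a b c : V} {l l' : List (V × V)}
    (h1 : EWalk D a b l) (h2 : EWalk D b c l') : EWalk D a c (l ++ l') := by
  induction h1 with
  | single h => exact EWalk.cons h h2
  | cons h _ ih => exact EWalk.cons h (ih h2)

lemma EWalk.of_transGen {D : Multiset (V × V)} {a b : V}
    (h : Relation.TransGen (fun x y => (x, y) ∈ D) a b) : ∃ l, EWalk D a b l := by
  induction h with
  | single h => exact ⟨_, EWalk.single h⟩
  | tail _ h ih =>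
    obtain ⟨l, hl⟩ := ih
    exact ⟨_, hl.append (EWalk.single h)⟩

lemma EWalk.inout {D : Multiset (V × V)} {a b : V} {l : List (V × V)}
    (hw : EWalk D a b l) (x : V) :
    outdeg (l : Multiset (V × V)) x + (if x = b then 1 else 0)
      = indeg (l : Multiset (V × V)) x + (if x = a then 1 else 0) := by
  induction hw with
  | @single a b h =>
    have h1 : ((([(a, b)] : List (V × V))) : Multiset (V × V)) = (a, b) ::ₘ 0 := rfl
    rw [h1, indeg_cons, outdeg_cons, indeg_zero, outdeg_zero]
    dsimp only
    split_ifs <;> omega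
  | @cons a b c l h hw ih =>
    have h1 : ((((a, b) :: l : List (V × V))) : Multiset (V × V))
        = (a, b) ::ₘ (l : Multiset (V × V)) := rfl
    rw [h1, indeg_cons, outdeg_cons]
    dsimp only
    split_ifs at ih ⊢ <;> omega

lemma EWalk.from_mem {D : Multiset (V × V)} {a b : V} {l : List (V × V)}
    (hw : EWalk D a b l) : ∀ e ∈ l, ∃ l', EWalk D e.1 b (e :: l') ∧ l'.length < l.length := by
  induction hw with
  | @single a b h =>
    intro e he; simp at he; subst he
    exact ⟨[], EWalk.single h, by simp⟩
  | @cons a b c l h hw ih =>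
    intro e he
    rcases List.mem_cons.1 he with h' | h'
    · subst h'; exact ⟨l, EWalk.cons h hw, by simp⟩
    · obtain ⟨l', hl', hlen⟩ := ih e h'
      exact ⟨l', hl', by simp; omega⟩

lemma EWalk.dedup {D : Multiset (V × V)} :
    ∀ n {a c : V} {l : List (V × V)}, l.length ≤ n → EWalk D a c l →
      ∃ l', EWalk D a c l' ∧ l'.Nodup ∧ l'.length ≤ l.length := by
  intro n
  induction n with
  | zero => intro a c l hl hw; exact absurd (List.length_eq_zero_iff.1 (Nat.le_zero.1 hl)) hw.ne_nil
  | succ n ih =>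
    intro a c l hl hw
    cases hw with
    | single h => exact ⟨_, EWalk.single h, by simp, le_rfl⟩
    | @cons _ b _ rest h hw =>
      have hrn : rest.length ≤ n := by simpa using hl
      obtain ⟨rest', hw', hnd', hlen'⟩ := ih hrn hw
      by_cases hmem : (a, b) ∈ rest'
      · obtain ⟨l2, hl2, hlen2⟩ := hw'.from_mem (a, b) hmem
        have hw2 : EWalk D a c ((a, b) :: l2) := hl2
        have hlen3 : ((a, b) :: l2).length ≤ n := by
          simp only [List.length_cons]
          omega
        obtain ⟨l'', hw'', hnd'', hlen''⟩ := ih hlen3 hw2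
        exact ⟨l'', hw'', hnd'', by simp only [List.length_cons] at hlen'' ⊢; omega⟩
      · exact ⟨(a, b) :: rest', EWalk.cons h hw', List.nodup_cons.2 ⟨hmem, hnd'⟩,
          by simpa using Nat.succ_le_succ hlen'⟩

lemma indeg_eq_zero_iff {D : Multiset (V × V)} {v : V} :
    indeg D v = 0 ↔ ∀ e ∈ D, e.2 ≠ v := by
  simp only [indeg, Multiset.card_eq_zero, Multiset.filter_eq_nil]

lemma sub_indeg {C D : Multiset (V × V)} (h : C ≤ D) (v : V) :
    indeg (D - C) v = indeg D v - indeg C v := by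
  simp only [indeg, Multiset.filter_sub]
  rw [Multiset.card_sub (Multiset.filter_le_filter _ h)]

lemma sub_outdeg {C D : Multiset (V × V)} (h : C ≤ D) (v : V) :
    outdeg (D - C) v = outdeg D v - outdeg C v := by
  simp only [outdeg, Multiset.filter_sub]
  rw [Multiset.card_sub (Multiset.filter_le_filter _ h)]

lemma indeg_le_of_le {C D : Multiset (V × V)} (h : C ≤ D) (v : V) :
    indeg C v ≤ indeg D v :=
  Multiset.card_le_card (Multiset.filter_le_filter _ h)

lemma outdeg_le_of_le {C D : Multiset (V × V)} (h : C ≤ D) (v : V) :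
    outdeg C v ≤ outdeg D v :=
  Multiset.card_le_card (Multiset.filter_le_filter _ h)

lemma dacyclic_of_le {C D : Multiset (V × V)} (h : C ≤ D) (hD : DAcyclic D) :
    DAcyclic C := fun v hv =>
  hD v (Relation.TransGen.mono (fun a b hab => Multiset.mem_of_le h hab) v v hv)

/-- An acyclic multigraph with nonnegative balance everywhere is orderable. -/
lemma orderable_of_acyclic (G : SimpleGraph V) :
    ∀ (n : ℕ) (D : Multiset (V × V)) (p : V → ℕ), Multiset.card D ≤ n →
    (∀ e ∈ D, G.Adj e.1 e.2) → DAcyclic D → (∀ v, 0 ≤ balance D p v) →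
    ∃ σ : List (V × V), (σ : Multiset (V × V)) = D ∧ IsValidSeq G p σ := by
  classical
  intro n
  induction n with
  | zero =>
    intro D p hcard _ _ _
    have : D = 0 := Multiset.card_eq_zero.1 (Nat.le_zero.1 hcard)
    exact ⟨[], by simp [this], trivial⟩
  | succ n ih =>
    intro D p hcard hadj hacy hbal
    rcases eq_or_ne D 0 with rfl | hne
    · exact ⟨[], by simp, trivial⟩
    · -- pick a source vertex: minimal among sources wrt TransGen
      obtain ⟨e₀, he₀⟩ := Multiset.exists_mem_of_ne_zero hne
      set S : Finset V := (D.toFinset.image Prod.fst) with hS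
      have hSne : S.Nonempty := ⟨e₀.1, Finset.mem_image.2 ⟨e₀, Multiset.mem_toFinset.2 he₀, rfl⟩⟩
      obtain ⟨m, hmS, hmin⟩ := exists_min_rel
        (fun x y => Relation.TransGen (fun a b => (a, b) ∈ D) x y)
        (fun _ _ _ h1 h2 => h1.trans h2) hacy S hSne
      obtain ⟨f₀, hf₀D, hf₀⟩ : ∃ f ∈ D, f.1 = m := by
        obtain ⟨f, hf, hfm⟩ := Finset.mem_image.1 hmS
        exact ⟨f, Multiset.mem_toFinset.1 hf, hfm⟩
      have hindeg : indeg D m = 0 := by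
        rw [indeg_eq_zero_iff]
        intro f hf hfm
        have hfS : f.1 ∈ S := Finset.mem_image.2 ⟨f, Multiset.mem_toFinset.2 hf, rfl⟩
        refine hmin f.1 hfS (Relation.TransGen.single ?_)
        have h2 : (f.1, f.2) ∈ D := by simpa using hf
        rw [hfm] at h2
        exact h2
      have houtm : 1 ≤ outdeg D m := by
        have h1 : f₀ ∈ D.filter (fun e => e.1 = m) := Multiset.mem_filter.2 ⟨hf₀D, hf₀⟩
        exact Multiset.card_pos_iff_exists_mem.2 ⟨f₀, h1⟩
      have hpm : 2 ≤ p m := by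
        have := hbal m
        unfold balance at this
        rw [hindeg] at this
        omega
      -- remove the edge f₀ = (m, f₀.2)
      set D' := D.erase f₀ with hD'
      have hcons : f₀ ::ₘ D' = D := Multiset.cons_erase hf₀D
      have hD'le : D' ≤ D := Multiset.erase_le _ _
      have hcard' : Multiset.card D' ≤ n := by
        have : Multiset.card D = Multiset.card D' + 1 := by
          rw [← hcons]; simp
        omega
      have hbal' : ∀ v, 0 ≤ balance D' (applyMove p m f₀.2) v := by
        intro v
        have hb := hbal v
        unfold balance at hb ⊢
        rw [← hcons, indeg_cons, outdeg_cons] at hb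
        rw [applyMove_cast hpm]
        rw [hf₀] at hb
        split_ifs at hb ⊢ <;> push_cast at hb ⊢ <;> omega
      obtain ⟨σ', hσ'eq, hσ'val⟩ := ih D' (applyMove p m f₀.2) hcard'
        (fun e he => hadj e (Multiset.mem_of_le hD'le he))
        (dacyclic_of_le hD'le hacy) hbal'
      refine ⟨(m, f₀.2) :: σ', ?_, ?_⟩
      · show (m, f₀.2) ::ₘ (σ' : Multiset (V × V)) = D
        rw [hσ'eq, ← hf₀]
        simpa using hcons
      · exact ⟨hf₀ ▸ hadj f₀ hf₀D, hpm, hσ'val⟩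

/-- From a cyclic multigraph, remove cycles to get an acyclic submultigraph with
pointwise larger balances. -/
lemma exists_acyclic_le (p : V → ℕ) :
    ∀ (n : ℕ) (D : Multiset (V × V)), Multiset.card D ≤ n →
    ∃ D' : Multiset (V × V), D' ≤ D ∧ DAcyclic D' ∧
      (∀ v, balance D p v ≤ balance D' p v) ∧
      Multiset.card D' ≤ Multiset.card D ∧
      (¬ DAcyclic D → Multiset.card D' < Multiset.card D) := by
  intro n
  induction n with
  | zero =>
    intro D hcard
    have hD : D = 0 := Multiset.card_eq_zero.1 (Nat.le_zero.1 hcard)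
    subst hD
    refine ⟨0, le_rfl, fun v hv => ?_, fun v => le_rfl, le_rfl, fun h => absurd ?_ h⟩
    · cases hv with
      | single h => simp at h
      | tail _ h => simp at h
    · intro v hv
      cases hv with
      | single h => simp at h
      | tail _ h => simp at h
  | succ n ih =>
    intro D hcard
    by_cases hacy : DAcyclic D
    · exact ⟨D, le_rfl, hacy, fun v => le_rfl, le_rfl, fun h => absurd hacy h⟩
    · -- find a cycle, dedup it, remove it
      rw [DAcyclic] at hacy
      push_neg at hacy
      obtain ⟨v₀, hv₀⟩ := hacy
      obtain ⟨l, hl⟩ := EWalk.of_transGen hv₀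
      obtain ⟨l', hw, hnd, _⟩ := EWalk.dedup l.length le_rfl hl
      set C : Multiset (V × V) := (l' : Multiset (V × V)) with hC
      have hCD : C ≤ D := by
        rw [Multiset.le_iff_count]
        intro e
        by_cases he : e ∈ l'
        · have h1 : Multiset.count e C ≤ 1 :=
            Multiset.nodup_iff_count_le_one.1 (Multiset.coe_nodup.2 hnd) e
          have h2 : 1 ≤ Multiset.count e D :=
            Multiset.one_le_count_iff_mem.2 (hw.mem_of e he)
          omega
        · have : Multiset.count e C = 0 :=
            Multiset.count_eq_zero.2 (by simpa [hC] using he)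
          omega
      have hCne : C ≠ 0 := by
        rw [hC]
        simpa using hw.ne_nil
      have hCcard : 1 ≤ Multiset.card C := by
        rcases Multiset.exists_mem_of_ne_zero hCne with ⟨e, he⟩
        exact Multiset.card_pos_iff_exists_mem.2 ⟨e, he⟩
      set D₁ := D - C with hD₁
      have hD₁le : D₁ ≤ D := Multiset.sub_le_self _ _
      have hcard₁ : Multiset.card D₁ = Multiset.card D - Multiset.card C :=
        Multiset.card_sub hCD
      have hcard₁n : Multiset.card D₁ ≤ n := by rw [hcard₁]; omega
      have hbal₁ : ∀ v, balance D p v ≤ balance D₁ p v := by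
        intro v
        have hio := hw.inout v
        rw [← hC] at hio
        have hin := indeg_le_of_le hCD v
        have hout := outdeg_le_of_le hCD v
        have h1 : outdeg C v = indeg C v := by omega
        unfold balance
        rw [hD₁, sub_indeg hCD, sub_outdeg hCD]
        push_cast [Nat.cast_sub hin, Nat.cast_sub hout]
        omega
      obtain ⟨D', h1, h2, h3, h4, _⟩ := ih D₁ hcard₁n
      have h5 : Multiset.card D' ≤ Multiset.card D - Multiset.card C := hcard₁ ▸ h4
      have h6 : Multiset.card C ≤ Multiset.card D := Multiset.card_le_card hCD
      exact ⟨D', h1.trans hD₁le, h2, fun v => (hbal₁ v).trans (h3 v),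
        by omega, fun _ => by omega⟩

/-- Given any multigraph with admissible balances, produce a valid sequence realizing
an acyclic submultigraph of it. -/
lemma improve (G : SimpleGraph V) (p : V → ℕ) (D : Multiset (V × V))
    (hadj : ∀ e ∈ D, G.Adj e.1 e.2) (hbal : ∀ v, 0 ≤ balance D p v) :
    ∃ τ : List (V × V), IsValidSeq G p τ ∧ τ.length ≤ Multiset.card D ∧
      (¬ DAcyclic D → τ.length < Multiset.card D) ∧
      ∀ v, balance D p v ≤ (applySeq p τ v : ℤ) := by
  obtain ⟨D', hle, hacy, hbal', hcard, hstrict⟩ := exists_acyclic_le p (Multiset.card D) D le_rfl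
  obtain ⟨τ, hτeq, hτval⟩ := orderable_of_acyclic G (Multiset.card D') D' p le_rfl
    (fun e he => hadj e (Multiset.mem_of_le hle he))
    hacy (fun v => le_trans (hbal v) (hbal' v))
  have hτlen : τ.length = Multiset.card D' := by
    rw [← hτeq, Multiset.coe_card]
  refine ⟨τ, hτval, by omega, fun h => by have := hstrict h; omega, fun v => ?_⟩
  rw [applySeq_cast hτval v, hτeq]
  exact hbal' v

lemma balance_erase {D : Multiset (V × V)} {e : V × V} (he : e ∈ D) (p : V → ℕ) (v : V) :
    balance (D.erase e) p v
      = balance D p v - (if v = e.2 then 1 else 0) + 2 * (if v = e.1 then 1 else 0) := by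
  conv_rhs => rw [← Multiset.cons_erase he]
  unfold balance
  rw [indeg_cons, outdeg_cons]
  push_cast
  split_ifs <;> ring

lemma reach_sink {D : Multiset (V × V)} (hacy : DAcyclic D) {x : V}
    (hx : 1 ≤ outdeg D x) :
    ∃ z, Relation.TransGen (fun a b => (a, b) ∈ D) x z ∧ outdeg D z = 0 ∧ 1 ≤ indeg D z := by
  classical
  set rel : V → V → Prop := fun a b => (a, b) ∈ D with hrel
  obtain ⟨e, heD, he1⟩ : ∃ e ∈ D, e.1 = x := by
    have : 0 < Multiset.card (D.filter fun e => e.1 = x) := hx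
    obtain ⟨e, he⟩ := Multiset.card_pos_iff_exists_mem.1 this
    exact ⟨e, (Multiset.mem_filter.1 he).1, (Multiset.mem_filter.1 he).2⟩
  set T : Finset V := (D.toFinset.image Prod.snd).filter
    (fun z => Relation.TransGen rel x z) with hT
  have hTne : T.Nonempty := by
    refine ⟨e.2, Finset.mem_filter.2 ⟨Finset.mem_image.2 ⟨e, Multiset.mem_toFinset.2 heD, rfl⟩,
      Relation.TransGen.single ?_⟩⟩
    show (x, e.2) ∈ D
    rw [← he1]
    simpa using heD
  obtain ⟨m, hmT, hmin⟩ := exists_min_rel (fun a b => Relation.TransGen rel b a)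
    (fun _ _ _ h1 h2 => h2.trans h1) hacy T hTne
  have hmT' := Finset.mem_filter.1 hmT
  refine ⟨m, hmT'.2, ?_, ?_⟩
  · by_contra hout
    obtain ⟨f, hfD, hf1⟩ : ∃ f ∈ D, f.1 = m := by
      have h0 : 0 < Multiset.card (D.filter fun e => e.1 = m) := by
        unfold outdeg at hout; omega
      obtain ⟨f, hf⟩ := Multiset.card_pos_iff_exists_mem.1 h0
      exact ⟨f, (Multiset.mem_filter.1 hf).1, (Multiset.mem_filter.1 hf).2⟩
    have hmf : rel m f.2 := by
      show (m, f.2) ∈ D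
      rw [← hf1]
      simpa using hfD
    have hf2T : f.2 ∈ T := Finset.mem_filter.2
      ⟨Finset.mem_image.2 ⟨f, Multiset.mem_toFinset.2 hfD, rfl⟩,
        hmT'.2.tail hmf⟩
    exact hmin f.2 hf2T (Relation.TransGen.single hmf)
  · obtain ⟨b, -, hbm⟩ := Relation.TransGen.tail'_iff.mp hmT'.2
    have : (b, m) ∈ D.filter (fun e => e.2 = m) := Multiset.mem_filter.2 ⟨hbm, rfl⟩
    exact Multiset.card_pos_iff_exists_mem.2 ⟨_, this⟩

/-- Minimum Signatures Lemma. -/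
theorem minimum_signatures (G : SimpleGraph V) (p : V → ℕ) (r : V) (k : ℕ)
    (hpr : p r ≤ k) (σ : List (V × V)) (hσ : IsValidSeq G p σ)
    (hk : k ≤ applySeq p σ r)
    (hmin : ∀ τ : List (V × V), IsValidSeq G p τ → k ≤ applySeq p τ r →
      σ.length ≤ τ.length) :
    DAcyclic (σ : Multiset (V × V)) ∧
    (∀ v : V, 1 ≤ indeg (σ : Multiset (V × V)) v →
      outdeg (σ : Multiset (V × V)) v = 0 → v = r) ∧
    outdeg (σ : Multiset (V × V)) r = 0 ∧
    indeg (σ : Multiset (V × V)) r = k - p r := by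
  set D : Multiset (V × V) := (σ : Multiset (V × V)) with hD
  have hadjD : ∀ e ∈ D, G.Adj e.1 e.2 := by
    intro e he
    exact valid_adj hσ e (by simpa [hD] using he)
  have hbalD : ∀ v, 0 ≤ balance D p v := by
    intro v
    rw [← applySeq_cast hσ v]
    positivity
  have hbalr : (k : ℤ) ≤ balance D p r := by
    rw [← applySeq_cast hσ r]
    exact_mod_cast hk
  have hlen : σ.length = Multiset.card D := (Multiset.coe_card σ).symm
  -- Part 1: acyclicity
  have hacy : DAcyclic D := by
    by_contra h
    obtain ⟨τ, hτval, _, hτstrict, hτbal⟩ := improve G p D hadjD hbalD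
    have hτr : k ≤ applySeq p τ r := by
      have := le_trans hbalr (hτbal r)
      exact_mod_cast this
    have := hmin τ hτval hτr
    have := hτstrict h
    omega
  -- Part 2: proper sinks are r
  have hsink : ∀ v : V, 1 ≤ indeg D v → outdeg D v = 0 → v = r := by
    intro v hin hout
    by_contra hvr
    obtain ⟨e, heD, he2⟩ : ∃ e ∈ D, e.2 = v := by
      have h0 : 0 < Multiset.card (D.filter fun e => e.2 = v) := hin
      obtain ⟨e, he⟩ := Multiset.card_pos_iff_exists_mem.1 h0
      exact ⟨e, (Multiset.mem_filter.1 he).1, (Multiset.mem_filter.1 he).2⟩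
    have hbv : (1 : ℤ) ≤ balance D p v := by
      have : balance D p v = (p v : ℤ) + (indeg D v : ℤ) := by
        unfold balance
        rw [hout]
        push_cast
        ring
      rw [this]
      have : (1 : ℤ) ≤ (indeg D v : ℤ) := by exact_mod_cast hin
      have h0 : (0 : ℤ) ≤ (p v : ℤ) := by positivity
      omega
    set D' := D.erase e with hD'
    have hbal' : ∀ x, 0 ≤ balance D' p x := by
      intro x
      rw [hD', balance_erase heD, he2]
      have h1 := hbalD x
      split_ifs with hx1 hx2 <;> [skip; skip; skip; skip] <;> subst_vars <;> omega
    obtain ⟨τ, hτval, hτlen, _, hτbal⟩ := improve G p D'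
      (fun f hf => hadjD f (Multiset.mem_of_le (Multiset.erase_le _ _) hf)) hbal'
    have hbal'r : (k : ℤ) ≤ balance D' p r := by
      rw [hD', balance_erase heD, he2]
      have : ¬ (r = v) := fun hh => hvr hh.symm
      split_ifs <;> omega
    have hτr : k ≤ applySeq p τ r := by
      have := le_trans hbal'r (hτbal r)
      exact_mod_cast this
    have hm := hmin τ hτval hτr
    have hc : Multiset.card D' = Multiset.card D - 1 := by
      rw [hD', Multiset.card_erase_of_mem heD]
      rfl
    have hD1 : 1 ≤ Multiset.card D := Multiset.card_pos_iff_exists_mem.2 ⟨e, heD⟩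
    omega
  -- Part 3: outdegree of r is 0
  have houtr : outdeg D r = 0 := by
    by_contra h
    have h1 : 1 ≤ outdeg D r := by omega
    obtain ⟨z, hz, hzout, hzin⟩ := reach_sink hacy h1
    have := hsink z hzin hzout
    subst this
    exact hacy z hz
  -- Part 4: indegree of r is exactly k - p r
  have hounb : balance D p r = (p r : ℤ) + (indeg D r : ℤ) := by
    unfold balance
    rw [houtr]
    push_cast
    ring
  have hlow : k - p r ≤ indeg D r := by
    rw [hounb] at hbalr
    omega
  have hup : indeg D r ≤ k - p r := by
    by_contra h
    have hkr : (k : ℤ) + 1 ≤ (p r : ℤ) + (indeg D r : ℤ) := by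
      have : k - p r + 1 ≤ indeg D r := by omega
      have h2 : k + 1 ≤ p r + indeg D r := by omega
      exact_mod_cast h2
    have hin : 1 ≤ indeg D r := by omega
    obtain ⟨e, heD, he2⟩ : ∃ e ∈ D, e.2 = r := by
      have h0 : 0 < Multiset.card (D.filter fun e => e.2 = r) := hin
      obtain ⟨e, he⟩ := Multiset.card_pos_iff_exists_mem.1 h0
      exact ⟨e, (Multiset.mem_filter.1 he).1, (Multiset.mem_filter.1 he).2⟩
    set D' := D.erase e with hD'
    have hbal' : ∀ x, 0 ≤ balance D' p x := by
      intro x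
      rw [hD', balance_erase heD, he2]
      have h1 := hbalD x
      by_cases hx : x = r
      · subst hx
        rw [hounb]
        split_ifs <;> omega
      · split_ifs <;> omega
    have hbal'r : (k : ℤ) ≤ balance D' p r := by
      rw [hD', balance_erase heD, he2, hounb]
      have hner : e.1 ≠ r := by
        intro hh
        have := hadjD e heD
        rw [hh, he2] at this
        exact G.irrefl this
      have : ¬ (r = e.1) := fun hh => hner hh.symm
      split_ifs <;> omega
    obtain ⟨τ, hτval, hτlen, _, hτbal⟩ := improve G p D'
      (fun f hf => hadjD f (Multiset.mem_of_le (Multiset.erase_le _ _) hf)) hbal'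
    have hτr : k ≤ applySeq p τ r := by
      have := le_trans hbal'r (hτbal r)
      exact_mod_cast this
    have hm := hmin τ hτval hτr
    have hc : Multiset.card D' = Multiset.card D - 1 := by
      rw [hD', Multiset.card_erase_of_mem heD]
      rfl
    have hD1 : 1 ≤ Multiset.card D := Multiset.card_pos_iff_exists_mem.2 ⟨e, heD⟩
    omega
  exact ⟨hacy, hsink, houtr, le_antisymm hup hlow⟩
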